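/- Let L be a field and suppose given elements y₁,…,y₅ ∈ L and nonzero T₁, T₂, T₃, T₄ ∈ L, and units v₁,…,v₁₀ ∈ L* satisfying the ten relations: y₁ − T₁y₂ = v₁, y₂ − T₂y₃ = v₂, y₁ − T₁T₂y₃ = v₃, y₃ − T₃y₄ = v₄, y₂ − T₂T₃y₄ = v₅, y₁ − T₁T₂T₃y₄ = v₆, y₂ − T₂T₃T₄y₅ = v₇, y₁ − T₁T₂T₃T₄y₅ = v₈, y₃ − T₃T₄y₅ = v₉, y₄ − T₄y₅ = v₁₀. Then T₁ = v₃/v₂ − v₁/v₂ = v₆/v₅ − v₁/v₅ = v₈/v₇ − v₁/v₇, and at least two of these three representations of T₁ as a difference of two ratios are distinct as unordered pairs: not all three pairs {v₃/v₂, −v₁/v₂}, {v₆/v₅, −v₁/v₅}, {v₈/v₇, −v₁/v₇} coincide. -/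

import Mathlib

lemma pair_eq_pair_aux {α : Type*} {a b c d : α} (h : ({a, b} : Multiset α) = {c, d}) :
    (a = c ∧ b = d) ∨ (a = d ∧ b = c) := by
  have ha : a ∈ ({c, d} : Multiset α) := h ▸ Multiset.mem_cons_self a {b}
  simp only [Multiset.insert_eq_cons, Multiset.mem_cons, Multiset.mem_singleton] at ha
  rcases ha with rfl | rfl
  · left
    refine ⟨rfl, ?_⟩
    have h' : ({b} : Multiset α) = {d} := by
      have h2 : a ::ₘ {b} = a ::ₘ {d} := by simpa [Multiset.insert_eq_cons] using h
      exact (Multiset.cons_inj_right a).mp h2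
    exact Multiset.singleton_inj.mp h'
  · right
    refine ⟨rfl, ?_⟩
    have hcomm : ({c, a} : Multiset α) = {a, c} := by
      show c ::ₘ a ::ₘ 0 = a ::ₘ c ::ₘ 0
      exact Multiset.cons_swap c a 0
    rw [hcomm] at h
    have h' : ({b} : Multiset α) = {c} := by
      have h2 : a ::ₘ {b} = a ::ₘ {c} := by simpa [Multiset.insert_eq_cons] using h
      exact (Multiset.cons_inj_right a).mp h2
    exact Multiset.singleton_inj.mp h'

/-- The key combinatorial lemma: the ten unit relations force `T₁` to be representable
in at least two essentially different ways as a sum of two units. -/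
theorem two_essentially_different_representations {L : Type*} [Field L]
    (y₁ y₂ y₃ y₄ y₅ : L) (T₁ T₂ T₃ T₄ : L)
    (hT₁ : T₁ ≠ 0) (hT₂ : T₂ ≠ 0) (hT₃ : T₃ ≠ 0) (hT₄ : T₄ ≠ 0)
    (v₁ v₂ v₃ v₄ v₅ v₆ v₇ v₈ v₉ v₁₀ : L)
    (hv₁ : v₁ ≠ 0) (hv₂ : v₂ ≠ 0) (hv₃ : v₃ ≠ 0) (hv₄ : v₄ ≠ 0) (hv₅ : v₅ ≠ 0)
    (hv₆ : v₆ ≠ 0) (hv₇ : v₇ ≠ 0) (hv₈ : v₈ ≠ 0) (hv₉ : v₉ ≠ 0) (hv₁₀ : v₁₀ ≠ 0)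
    (e₁ : y₁ - T₁ * y₂ = v₁)
    (e₂ : y₂ - T₂ * y₃ = v₂)
    (e₃ : y₁ - T₁ * T₂ * y₃ = v₃)
    (e₄ : y₃ - T₃ * y₄ = v₄)
    (e₅ : y₂ - T₂ * T₃ * y₄ = v₅)
    (e₆ : y₁ - T₁ * T₂ * T₃ * y₄ = v₆)
    (e₇ : y₂ - T₂ * T₃ * T₄ * y₅ = v₇)
    (e₈ : y₁ - T₁ * T₂ * T₃ * T₄ * y₅ = v₈)
    (e₉ : y₃ - T₃ * T₄ * y₅ = v₉)
    (e₁₀ : y₄ - T₄ * y₅ = v₁₀) :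
    T₁ = v₃ / v₂ - v₁ / v₂ ∧ T₁ = v₆ / v₅ - v₁ / v₅ ∧ T₁ = v₈ / v₇ - v₁ / v₇ ∧
    ¬(({v₃ / v₂, -(v₁ / v₂)} : Multiset L) = ({v₆ / v₅, -(v₁ / v₅)} : Multiset L) ∧
      ({v₆ / v₅, -(v₁ / v₅)} : Multiset L) = ({v₈ / v₇, -(v₁ / v₇)} : Multiset L)) := by
  have h1 : v₃ - v₁ = T₁ * v₂ := by linear_combination e₁ - e₃ + T₁ * e₂
  have h2 : v₆ - v₁ = T₁ * v₅ := by linear_combination e₁ - e₆ + T₁ * e₅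
  have h3 : v₈ - v₁ = T₁ * v₇ := by linear_combination e₁ - e₈ + T₁ * e₇
  have h4 : v₅ - v₂ = T₂ * v₄ := by linear_combination e₂ - e₅ + T₂ * e₄
  have h5 : v₇ - v₂ = T₂ * v₉ := by linear_combination e₂ - e₇ + T₂ * e₉
  have h6 : v₇ - v₅ = T₂ * T₃ * v₁₀ := by linear_combination e₅ - e₇ + T₂ * T₃ * e₁₀
  have hne25 : v₂ ≠ v₅ := by
    intro h; apply mul_ne_zero hT₂ hv₄; linear_combination -h4 - h
  have hne27 : v₂ ≠ v₇ := by
    intro h; apply mul_ne_zero hT₂ hv₉; linear_combination -h5 - h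
  have hne57 : v₅ ≠ v₇ := by
    intro h; apply mul_ne_zero (mul_ne_zero hT₂ hT₃) hv₁₀; linear_combination -h6 - h
  refine ⟨?_, ?_, ?_, ?_⟩
  · field_simp; linear_combination -h1
  · field_simp; linear_combination -h2
  · field_simp; linear_combination -h3
  · rintro ⟨hA, hB⟩
    rcases pair_eq_pair_aux hA with ⟨_, hA2⟩ | ⟨hA1, hA2⟩
    · -- -(v₁/v₂) = -(v₁/v₅) forces v₂ = v₅
      apply hne25
      have : v₁ / v₂ = v₁ / v₅ := neg_injective hA2
      rw [div_eq_div_iff hv₂ hv₅] at this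
      exact (mul_left_cancel₀ hv₁ this).symm
    · rcases pair_eq_pair_aux hB with ⟨_, hB2⟩ | ⟨hB1, hB2⟩
      · apply hne57
        have : v₁ / v₅ = v₁ / v₇ := neg_injective hB2
        rw [div_eq_div_iff hv₅ hv₇] at this
        exact (mul_left_cancel₀ hv₁ this).symm
      · -- hA2 : -(v₁/v₂) = v₆/v₅, hB1 : v₆/v₅ = -(v₁/v₇)
        apply hne27
        have h' : -(v₁ / v₂) = -(v₁ / v₇) := hA2.trans hB1
        have : v₁ / v₂ = v₁ / v₇ := neg_injective h'
        rw [div_eq_div_iff hv₂ hv₇] at this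
        exact (mul_left_cancel₀ hv₁ this).symm
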